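/- Let f : ℤ_p → ℤ_p be continuous and suppose there is a family of contractions R_i : ℤ_p → ℤ_p (i in an index set I) with f ∘ R_i = id for each i and ⋃_{i∈I} R_i(ℤ_p) = ℤ_p. Then f has the shadowing property: for every ε > 0 there is δ > 0 such that every δ-pseudo-orbit of f is ε-shadowed by a true orbit of f. In fact, every δ-pseudo-orbit is (δ/2)-shadowed. -/

import Mathlib

/-- Composition `g n ∘ g (n+1) ∘ ⋯ ∘ g (n+m-1)`. -/
def compRI {α : Type*} (g : ℕ → α → α) : ℕ → ℕ → α → α
  | _, 0 => id
  | n, m + 1 => fun v => g n (compRI g (n + 1) m v)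

lemma padic_norm_gap {p : ℕ} [Fact p.Prime] (u v : ℤ_[p]) (h : ‖u‖ < ‖v‖) :
    ‖u‖ ≤ ‖v‖ / p := by
  have hv : v ≠ 0 := by
    rintro rfl; simp at h; exact absurd h (not_lt.mpr (norm_nonneg u))
  rw [PadicInt.norm_eq_zpow_neg_valuation hv] at h ⊢
  have := (PadicInt.norm_lt_pow_iff_norm_le_pow_sub_one u (-v.valuation : ℤ)).mp h
  calc ‖u‖ ≤ (p : ℝ) ^ ((-v.valuation : ℤ) - 1) := this
    _ = (p : ℝ) ^ (-v.valuation : ℤ) / p := by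
        rw [zpow_sub_one₀ (by exact_mod_cast (Fact.out (p := p.Prime)).ne_zero)]
        rfl

theorem shadowing_from_right_inverse_contractions (p : ℕ) [Fact p.Prime]
    {I : Type*} (f : ℤ_[p] → ℤ_[p]) (hf : Continuous f)
    (R : I → ℤ_[p] → ℤ_[p])
    (hcontr : ∀ i : I, ∃ c : ℝ, c < 1 ∧ ∀ x y : ℤ_[p], ‖R i x - R i y‖ ≤ c * ‖x - y‖)
    (hright : ∀ (i : I) (x : ℤ_[p]), f (R i x) = x)
    (hcover : (⋃ i : I, Set.range (R i)) = Set.univ) :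
    (∀ ε > (0 : ℝ), ∃ δ > (0 : ℝ), ∀ x : ℕ → ℤ_[p],
        (∀ n : ℕ, ‖f (x n) - x (n + 1)‖ ≤ δ) →
        ∃ z : ℤ_[p], ∀ n : ℕ, ‖x n - f^[n] z‖ ≤ ε) ∧
    (∀ δ > (0 : ℝ), ∀ x : ℕ → ℤ_[p],
        (∀ n : ℕ, ‖f (x n) - x (n + 1)‖ ≤ δ) →
        ∃ z : ℤ_[p], ∀ n : ℕ, ‖x n - f^[n] z‖ ≤ δ / 2) := by
  have hp2 : (2 : ℝ) ≤ p := by exact_mod_cast (Fact.out (p := p.Prime)).two_le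
  have hp0 : (0 : ℝ) < p := by linarith
  have hp1 : (1 : ℝ) < p := by linarith
  -- each R i contracts by a factor 1/p
  have hRstep : ∀ (i : I) (a b : ℤ_[p]), ‖R i a - R i b‖ ≤ ‖a - b‖ / p := by
    intro i a b
    rcases eq_or_ne a b with rfl | hab
    · simp
    obtain ⟨c, hc1, hc⟩ := hcontr i
    have hab' : (0 : ℝ) < ‖a - b‖ := by
      simpa [norm_pos_iff] using sub_ne_zero_of_ne hab
    have : ‖R i a - R i b‖ < ‖a - b‖ :=
      lt_of_le_of_lt (hc a b) (by nlinarith)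
    exact padic_norm_gap _ _ this
  have key : ∀ δ > (0 : ℝ), ∀ x : ℕ → ℤ_[p],
      (∀ n : ℕ, ‖f (x n) - x (n + 1)‖ ≤ δ) →
      ∃ z : ℤ_[p], ∀ n : ℕ, ‖x n - f^[n] z‖ ≤ δ / 2 := by
    intro δ hδ x hx
    -- choose sections through each x n
    have hsec : ∀ n : ℕ, ∃ i : I, R i (f (x n)) = x n := by
      intro n
      have hmem : x n ∈ ⋃ i : I, Set.range (R i) := hcover ▸ Set.mem_univ _
      obtain ⟨i, u, hu⟩ := by simpa using hmem
      exact ⟨i, by rw [← hu, hright]⟩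
    choose idx hidx using hsec
    set g : ℕ → ℤ_[p] → ℤ_[p] := fun n => R (idx n) with hg
    have hidx' : ∀ n : ℕ, g n (f (x n)) = x n := hidx
    have hgstep : ∀ (n : ℕ) (a b : ℤ_[p]), ‖g n a - g n b‖ ≤ ‖a - b‖ / p :=
      fun n => hRstep (idx n)
    have hfg : ∀ (n : ℕ) (a : ℤ_[p]), f (g n a) = a := fun n => hright (idx n)
    -- iterate formula
    have hiter : ∀ (n m k : ℕ) (v : ℤ_[p]),
        f^[n] (compRI g k (n + m) v) = compRI g (k + n) m v := by
      intro n
      induction n with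
      | zero => intro m k v; simp
      | succ n ih =>
        intro m k v
        have h1 : n + 1 + m = (n + m) + 1 := by ring
        rw [Function.iterate_succ_apply, h1]
        show f^[n] (f (g k (compRI g (k + 1) (n + m) v))) = _
        rw [hfg, ih, add_assoc, add_comm 1 n]
    -- contraction of compRI
    have hcomp : ∀ (m n : ℕ) (a b : ℤ_[p]),
        ‖compRI g n m a - compRI g n m b‖ ≤ ‖a - b‖ * (1 / p) ^ m := by
      intro m
      induction m with
      | zero => intro n a b; simp [compRI]
      | succ m ih =>
        intro n a b
        show ‖g n (compRI g (n+1) m a) - g n (compRI g (n+1) m b)‖ ≤ _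
        calc ‖g n (compRI g (n+1) m a) - g n (compRI g (n+1) m b)‖
            ≤ ‖compRI g (n+1) m a - compRI g (n+1) m b‖ / p := hgstep _ _ _
          _ ≤ (‖a - b‖ * (1 / p) ^ m) / p := by gcongr; exact ih _ _ _
          _ = ‖a - b‖ * (1 / p) ^ (m + 1) := by
              rw [pow_succ, div_eq_mul_inv, one_div]; ring
    -- shift formula
    have hshift : ∀ (m n : ℕ) (v : ℤ_[p]),
        compRI g n (m + 1) v = compRI g n m (g (n + m) v) := by
      intro m
      induction m with
      | zero => intro n v; simp [compRI]
      | succ m ih =>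
        intro n v
        show g n (compRI g (n+1) (m+1) v) = g n (compRI g (n+1) m (g (n + (m+1)) v))
        rw [ih (n+1) v, add_assoc, add_comm 1 m]
    -- closeness of pulled-back points
    have hclose : ∀ (m n : ℕ), ‖compRI g n (m + 1) (x (n + (m + 1))) - x n‖ ≤ δ / p := by
      intro m
      induction m with
      | zero =>
        intro n
        show ‖g n (x (n + 1)) - x n‖ ≤ δ / p
        calc ‖g n (x (n + 1)) - x n‖ = ‖g n (x (n + 1)) - g n (f (x n))‖ := by rw [hidx' _]
          _ ≤ ‖x (n + 1) - f (x n)‖ / p := hgstep _ _ _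
          _ ≤ δ / p := by
              rw [norm_sub_rev]
              gcongr
              exact hx n
      | succ m ih =>
        intro n
        have harg : n + (m + 1 + 1) = (n + 1) + (m + 1) := by ring
        show ‖g n (compRI g (n+1) (m+1) (x (n + (m+1+1)))) - x n‖ ≤ δ / p
        rw [harg]
        set u := compRI g (n+1) (m+1) (x ((n+1) + (m+1))) with hu
        have h1 : ‖u - x (n + 1)‖ ≤ δ / p := ih (n + 1)
        have h2 : ‖u - f (x n)‖ ≤ δ := by
          have : u - f (x n) = (u - x (n + 1)) + (x (n + 1) - f (x n)) := by ring
          rw [this]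
          refine le_trans (PadicInt.nonarchimedean _ _) (max_le ?_ ?_)
          · calc ‖u - x (n+1)‖ ≤ δ / p := h1
              _ ≤ δ / 1 := by gcongr <;> linarith
              _ = δ := div_one δ
          · rw [norm_sub_rev]; exact hx n
        calc ‖g n u - x n‖ = ‖g n u - g n (f (x n))‖ := by rw [hidx' _]
          _ ≤ ‖u - f (x n)‖ / p := hgstep _ _ _
          _ ≤ δ / p := by gcongr
    -- the approximating sequence
    set z : ℕ → ℤ_[p] := fun N => compRI g 0 N (x N) with hz
    have hcauchy : CauchySeq z := by
      apply cauchySeq_of_le_geometric (1 / (p : ℝ)) (δ / p)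
        (by rw [div_lt_one hp0]; exact hp1)
      intro N
      rw [dist_eq_norm]
      have hzN1 : z (N + 1) = compRI g 0 N (g N (x (N + 1))) := by
        rw [hz]; simpa using hshift N 0 (x (N + 1))
      rw [hzN1]
      calc ‖z N - compRI g 0 N (g N (x (N+1)))‖
          ≤ ‖x N - g N (x (N+1))‖ * (1 / p) ^ N := hcomp N 0 _ _
        _ ≤ (δ / p) * (1 / p) ^ N := by
            apply mul_le_mul_of_nonneg_right _ (by positivity)
            calc ‖x N - g N (x (N+1))‖ = ‖g N (f (x N)) - g N (x (N+1))‖ := by rw [hidx' _]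
              _ ≤ ‖f (x N) - x (N+1)‖ / p := hgstep _ _ _
              _ ≤ δ / p := by gcongr; exact hx N
    obtain ⟨w, hw⟩ := cauchySeq_tendsto_of_complete hcauchy
    refine ⟨w, fun n => ?_⟩
    -- f^[n] z (n + (m+1)) is within δ/p of x n
    have hval : ∀ m : ℕ, ‖x n - f^[n] (z (n + (m + 1)))‖ ≤ δ / p := by
      intro m
      have : f^[n] (z (n + (m + 1))) = compRI g n (m + 1) (x (n + (m + 1))) := by
        rw [hz]
        have := hiter n (m + 1) 0 (x (n + (m + 1)))
        simpa using this
      rw [this, norm_sub_rev]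
      exact hclose m n
    have htend : Filter.Tendsto (fun m : ℕ => ‖x n - f^[n] (z (n + (m + 1)))‖)
        Filter.atTop (nhds ‖x n - f^[n] w‖) := by
      have hidxlim : Filter.Tendsto (fun k : ℕ => n + (k + 1)) Filter.atTop
          Filter.atTop :=
        Filter.tendsto_atTop_mono (f := id) (fun k => by simp; omega) Filter.tendsto_id
      exact (Filter.Tendsto.const_sub _
        (((hf.iterate n).tendsto w).comp (hw.comp hidxlim))).norm
    have := le_of_tendsto htend (Filter.Eventually.of_forall hval)
    calc ‖x n - f^[n] w‖ ≤ δ / p := this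
      _ ≤ δ / 2 := by gcongr <;> linarith
  exact ⟨fun ε hε => ⟨ε, hε, fun x hxp => by
    obtain ⟨w, hw⟩ := key ε hε x hxp
    exact ⟨w, fun n => le_trans (hw n) (by linarith)⟩⟩, key⟩
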